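/- Let A = (a_ijk) be a third order 3-dimensional symmetric tensor with entries in {-1, 0, 1} satisfying a₁₂₂ = a₁₃₃ = 1 and a₁₂₃ = 0. Then A is strictly copositive if and only if a_iii = 1 and a_iij + a_ijj ≥ 0 for all i ≠ j in {1,2,3}, and a₁₁₂ + a₁₁₃ ≥ -1. -/

import Mathlib

set_option linter.unnecessarySeqFocus false
lemma gpos (x y z : ℝ) (hx : 0 ≤ x) (hy : 0 ≤ y) (hz : 0 ≤ z) (hzy : z ≤ y)
    (hpos : 0 < x + y + z) :
    0 < x^3 + y^3 + z^3 + 3*x*y^2 + 3*x*z^2 - 3*x^2*y - 3*y^2*z + 3*y*z^2 := by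
  rcases lt_or_eq_of_le hx with h1 | h1
  · nlinarith [mul_nonneg hx (sq_nonneg (2*x-3*y)), mul_nonneg hy (sq_nonneg (2*y-3*z)),
      mul_pos (mul_pos h1 h1) h1, mul_nonneg (mul_nonneg hx hy) hy,
      mul_nonneg (mul_nonneg hx hz) hz, mul_nonneg (mul_nonneg hy hz) hz,
      mul_nonneg (mul_nonneg hz hz) hz]
  · subst h1
    have hy' : 0 < y := by nlinarith
    rcases lt_or_eq_of_le hz with h2 | h2
    · nlinarith [mul_nonneg hy (sq_nonneg (2*y-3*z)), mul_pos (mul_pos h2 h2) h2,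
        mul_nonneg (mul_nonneg hy hz) hz]
    · subst h2
      nlinarith [mul_pos (mul_pos hy' hy') hy']

lemma mem_cases {c : ℝ} (h : c ∈ ({-1, 0, 1} : Set ℝ)) : c = -1 ∨ c = 0 ∨ c = 1 := by
  simpa using h

theorem stmt_14 (a₁₁₁ a₂₂₂ a₃₃₃ a₁₁₂ a₁₂₂ a₁₁₃ a₁₃₃ a₂₂₃ a₂₃₃ a₁₂₃ : ℝ)
    (hset : ∀ c ∈ [a₁₁₁, a₂₂₂, a₃₃₃, a₁₁₂, a₁₂₂, a₁₁₃, a₁₃₃, a₂₂₃, a₂₃₃, a₁₂₃],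
      c ∈ ({-1, 0, 1} : Set ℝ))
    (h122 : a₁₂₂ = 1) (h133 : a₁₃₃ = 1) (h123 : a₁₂₃ = 0) :
    (∀ x₁ x₂ x₃ : ℝ, 0 ≤ x₁ → 0 ≤ x₂ → 0 ≤ x₃ → (x₁, x₂, x₃) ≠ (0, 0, 0) →
      0 < a₁₁₁*x₁^3 + a₂₂₂*x₂^3 + a₃₃₃*x₃^3 + 3*a₁₁₂*x₁^2*x₂ + 3*a₁₂₂*x₁*x₂^2
          + 3*a₁₁₃*x₁^2*x₃ + 3*a₁₃₃*x₁*x₃^2 + 3*a₂₂₃*x₂^2*x₃ + 3*a₂₃₃*x₂*x₃^2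
          + 6*a₁₂₃*x₁*x₂*x₃) ↔
    (a₁₁₁ = 1 ∧ a₂₂₂ = 1 ∧ a₃₃₃ = 1 ∧
      a₁₁₂ + a₁₂₂ ≥ 0 ∧ a₁₁₃ + a₁₃₃ ≥ 0 ∧ a₂₂₃ + a₂₃₃ ≥ 0 ∧
      a₁₁₂ + a₁₁₃ ≥ -1) := by
  have m111 := mem_cases (hset a₁₁₁ (by simp))
  have m222 := mem_cases (hset a₂₂₂ (by simp))
  have m333 := mem_cases (hset a₃₃₃ (by simp))
  have m112 := mem_cases (hset a₁₁₂ (by simp))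
  have m113 := mem_cases (hset a₁₁₃ (by simp))
  have m223 := mem_cases (hset a₂₂₃ (by simp))
  have m233 := mem_cases (hset a₂₃₃ (by simp))
  subst h122 h133 h123
  constructor
  · intro H
    have h1 := H 1 0 0 (by norm_num) (le_refl 0) (le_refl 0) (by simp)
    have h2 := H 0 1 0 (le_refl 0) (by norm_num) (le_refl 0) (by simp)
    have h3 := H 0 0 1 (le_refl 0) (le_refl 0) (by norm_num) (by simp)
    norm_num at h1 h2 h3
    have e1 : a₁₁₁ = 1 := by rcases m111 with h|h|h <;> subst h <;> (revert h1; norm_num)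
    have e2 : a₂₂₂ = 1 := by rcases m222 with h|h|h <;> subst h <;> (revert h2; norm_num)
    have e3 : a₃₃₃ = 1 := by rcases m333 with h|h|h <;> subst h <;> (revert h3; norm_num)
    have h4 := H 0 1 1 (le_refl 0) (by norm_num) (by norm_num) (by simp)
    have h5 := H 4 1 1 (by norm_num) (by norm_num) (by norm_num) (by simp)
    rw [e1, e2, e3] at h4 h5
    norm_num at h4 h5
    refine ⟨e1, e2, e3, ?_, ?_, ?_, ?_⟩
    · rcases m112 with h|h|h <;> subst h <;> norm_num
    · rcases m113 with h|h|h <;> subst h <;> norm_num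
    · rcases m223 with h|h|h <;> rcases m233 with h'|h'|h' <;> subst h <;> subst h' <;>
        (revert h4; norm_num)
    · rcases m112 with h|h|h <;> rcases m113 with h'|h'|h' <;> subst h <;> subst h' <;>
        norm_num at h5 ⊢ <;>
        rcases m223 with g|g|g <;> rcases m233 with g'|g'|g' <;> subst g <;> subst g' <;>
        linarith
  · rintro ⟨e1, e2, e3, hb1, hb2, hb3, hb4⟩
    subst e1 e2 e3
    intro x₁ x₂ x₃ hx₁ hx₂ hx₃ hne
    have hpos : 0 < x₁ + x₂ + x₃ := by
      rcases lt_or_eq_of_le (by positivity : (0:ℝ) ≤ x₁ + x₂ + x₃) with h | h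
      · exact h
      · exfalso
        apply hne
        have e1 : x₁ = 0 := by linarith
        have e2 : x₂ = 0 := by linarith
        have e3 : x₃ = 0 := by linarith
        simp [e1, e2, e3]
    have hA : -1 ≤ a₁₁₂ := by rcases m112 with h|h|h <;> subst h <;> norm_num
    have hB : -1 ≤ a₁₁₃ := by rcases m113 with h|h|h <;> subst h <;> norm_num
    have hC : -1 ≤ a₂₂₃ := by rcases m223 with h|h|h <;> subst h <;> norm_num
    have hD : -1 ≤ a₂₃₃ := by rcases m233 with h|h|h <;> subst h <;> norm_num
    rcases le_total x₃ x₂ with hcmp | hcmp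
    · have key := gpos x₁ x₂ x₃ hx₁ hx₂ hx₃ hcmp hpos
      have hL : 0 ≤ a₁₁₂*x₂ + a₁₁₃*x₃ + x₂ := by
        nlinarith [mul_nonneg (by linarith : (0:ℝ) ≤ a₁₁₂ + 1) (by linarith : (0:ℝ) ≤ x₂ - x₃),
          mul_nonneg (by linarith : (0:ℝ) ≤ a₁₁₂ + a₁₁₃ + 1) hx₃]
      have hM : 0 ≤ a₂₂₃*x₂ + a₂₃₃*x₃ + x₂ - x₃ := by
        nlinarith [mul_nonneg (by linarith : (0:ℝ) ≤ a₂₂₃ + 1) (by linarith : (0:ℝ) ≤ x₂ - x₃),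
          mul_nonneg (by linarith : (0:ℝ) ≤ a₂₂₃ + a₂₃₃) hx₃]
      nlinarith [key, mul_nonneg (sq_nonneg x₁) hL, mul_nonneg (mul_nonneg hx₂ hx₃) hM]
    · have key := gpos x₁ x₃ x₂ hx₁ hx₃ hx₂ hcmp (by linarith)
      have hL : 0 ≤ a₁₁₂*x₂ + a₁₁₃*x₃ + x₃ := by
        nlinarith [mul_nonneg (by linarith : (0:ℝ) ≤ a₁₁₃ + 1) (by linarith : (0:ℝ) ≤ x₃ - x₂),
          mul_nonneg (by linarith : (0:ℝ) ≤ a₁₁₂ + a₁₁₃ + 1) hx₂]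
      have hM : 0 ≤ a₂₂₃*x₂ + a₂₃₃*x₃ + x₃ - x₂ := by
        nlinarith [mul_nonneg (by linarith : (0:ℝ) ≤ a₂₃₃ + 1) (by linarith : (0:ℝ) ≤ x₃ - x₂),
          mul_nonneg (by linarith : (0:ℝ) ≤ a₂₂₃ + a₂₃₃) hx₂]
      nlinarith [key, mul_nonneg (sq_nonneg x₁) hL, mul_nonneg (mul_nonneg hx₂ hx₃) hM]
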